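/- Under Assumption A1, suppose β_f ∈ ℝ^d satisfies β_f^⊤ B_{il} ≥ 1 for all i ∈ [n] and l ≠ opt(i). Then for every β ∈ ℝ^d, ⟨∇_β L(β), β_f⟩ ≤ (1/n) Σ_{i=1}^n Σ_{l≠opt(i)} exp(−γ_i^⊤ S(g_i(β))) (Σ(g_i(β)) γ_i)_l < 0. In particular, ∇_β L(β) ≠ 0 for every β ∈ ℝ^d. -/

import Mathlib

open Real Filter Finset

noncomputable section

namespace AttnGF

/-- Softmax of a vector in `ℝ^L`. -/
def S {L : ℕ} (u : Fin L → ℝ) (l : Fin L) : ℝ := Real.exp (u l) / ∑ j, Real.exp (u j)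

/-- Euclidean norm of a vector. -/
def l2 {d : ℕ} (x : Fin d → ℝ) : ℝ := Real.sqrt (∑ j, x j ^ 2)

/-- ℓ1 norm of a vector. -/
def l1 {d : ℕ} (x : Fin d → ℝ) : ℝ := ∑ j, |x j|

variable {n L d de : ℕ}

/-- Token scores γ_{il} = y_i v^⊤ x_{il}. -/
def gam (X : Fin n → Fin L → Fin d → ℝ) (y : Fin n → ℝ) (v : Fin d → ℝ)
    (i : Fin n) (l : Fin L) : ℝ := y i * ∑ j, v j * X i l j

/-- g_i(β) = X_i (β ⊙ z_i) for the diagonal attention model. -/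
def gD (X : Fin n → Fin L → Fin d → ℝ) (z : Fin n → Fin d → ℝ) (i : Fin n)
    (β : Fin d → ℝ) (l : Fin L) : ℝ := ∑ j, X i l j * (β j * z i j)

/-- Empirical exponential loss for the diagonal attention model. -/
def lossD (X : Fin n → Fin L → Fin d → ℝ) (z : Fin n → Fin d → ℝ)
    (y : Fin n → ℝ) (v : Fin d → ℝ) (β : Fin d → ℝ) : ℝ :=
  (1 / (n : ℝ)) * ∑ i, Real.exp (-(∑ l, gam X y v i l * S (gD X z i β) l))

/-- Constraint vectors B_{il} = z_i ⊙ (x_{i,opt(i)} − x_{il}). -/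
def Bv (X : Fin n → Fin L → Fin d → ℝ) (z : Fin n → Fin d → ℝ)
    (opt : Fin n → Fin L) (i : Fin n) (l : Fin L) (j : Fin d) : ℝ :=
  z i j * (X i (opt i) j - X i l j)

/-- (Σ(u) γ)_l where Σ(u) = Diag(S(u)) − S(u) S(u)^⊤. -/
def SigMul {L : ℕ} (u γv : Fin L → ℝ) (l : Fin L) : ℝ :=
  S u l * γv l - S u l * ∑ j, S u j * γv j

/-- j-th component of the gradient (partial derivative) of f at x. -/
def pD {d : ℕ} (f : (Fin d → ℝ) → ℝ) (x : Fin d → ℝ) (j : Fin d) : ℝ :=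
  fderiv ℝ f x (Pi.single j 1)

/-- Assumption A1. -/
def A1 (X : Fin n → Fin L → Fin d → ℝ) (y : Fin n → ℝ) (v : Fin d → ℝ)
    (opt : Fin n → Fin L) (nopt : Fin n → ℝ) : Prop :=
  ∀ i : Fin n, ∀ l : Fin L, l ≠ opt i →
    gam X y v i l < gam X y v i (opt i) ∧ gam X y v i l = nopt i

/-- Feasibility for the ℓ1-SVM. -/
def Feas (X : Fin n → Fin L → Fin d → ℝ) (z : Fin n → Fin d → ℝ)
    (opt : Fin n → Fin L) (βf : Fin d → ℝ) : Prop :=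
  ∀ i : Fin n, ∀ l : Fin L, l ≠ opt i → 1 ≤ ∑ j, βf j * Bv X z opt i l j

/-- Reparametrized gradient flow on (w₊, w₋). -/
def Flow (X : Fin n → Fin L → Fin d → ℝ) (z : Fin n → Fin d → ℝ)
    (y : Fin n → ℝ) (v : Fin d → ℝ) (wp wm : ℝ → Fin d → ℝ) : Prop :=
  ∀ t : ℝ, 0 ≤ t → ∀ j : Fin d,
    HasDerivAt (fun s => wp s j)
      (-(pD (fun u => lossD X z y v (fun k => (u k ^ 2 - wm t k ^ 2) / 2)) (wp t) j)) t ∧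
    HasDerivAt (fun s => wm s j)
      (-(pD (fun u => lossD X z y v (fun k => (wp t k ^ 2 - u k ^ 2) / 2)) (wm t) j)) t

/-- β(t) = (w₊(t)^{⊙2} − w₋(t)^{⊙2})/2. -/
def bCurve (wp wm : ℝ → Fin d → ℝ) (t : ℝ) (j : Fin d) : ℝ :=
  (wp t j ^ 2 - wm t j ^ 2) / 2

/-- Assumption A2 (initial loss bound). -/
def A2 (X : Fin n → Fin L → Fin d → ℝ) (z : Fin n → Fin d → ℝ)
    (y : Fin n → ℝ) (v : Fin d → ℝ) (opt : Fin n → Fin L) (nopt : Fin n → ℝ)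
    (β0 : Fin d → ℝ) : Prop :=
  ∀ jj : Fin n, lossD X z y v β0 ≤
    (Real.exp (-(nopt jj)) +
      ∑ i ∈ Finset.univ.erase jj, Real.exp (-(gam X y v i (opt i)))) / (n : ℝ)

/-- Margin μ(β) = min_{i, l ≠ opt(i)} β^⊤ B_{il}. -/
def margin (X : Fin n → Fin L → Fin d → ℝ) (z : Fin n → Fin d → ℝ)
    (opt : Fin n → Fin L) (β : Fin d → ℝ) : ℝ :=
  sInf {m : ℝ | ∃ i : Fin n, ∃ l : Fin L, l ≠ opt i ∧ m = ∑ j, β j * Bv X z opt i l j}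

/-- φ_{il}(t). -/
def phi (X : Fin n → Fin L → Fin d → ℝ) (z : Fin n → Fin d → ℝ)
    (y : Fin n → ℝ) (v : Fin d → ℝ) (β : ℝ → Fin d → ℝ) (i : Fin n) (l : Fin L)
    (t : ℝ) : ℝ :=
  -(2 / (n : ℝ)) * ∫ τ in (0:ℝ)..t,
    Real.exp (-(∑ l', gam X y v i l' * S (gD X z i (β τ)) l')) *
      SigMul (gD X z i (β τ)) (gam X y v i) l

/-- Dual variables λ_{il}(t) = φ_{il}(t) / ln μ(β(t)). -/
def lam (X : Fin n → Fin L → Fin d → ℝ) (z : Fin n → Fin d → ℝ)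
    (y : Fin n → ℝ) (v : Fin d → ℝ) (opt : Fin n → Fin L) (β : ℝ → Fin d → ℝ)
    (i : Fin n) (l : Fin L) (t : ℝ) : ℝ :=
  (1 / Real.log (margin X z opt (β t))) * phi X z y v β i l t

/-- g_i(K,Q) = X_i K Q^⊤ z_i for the full attention model. -/
def gM (X : Fin n → Fin L → Fin d → ℝ) (z : Fin n → Fin d → ℝ) (i : Fin n)
    (K Q : Fin d → Fin de → ℝ) (l : Fin L) : ℝ :=
  ∑ a, ∑ b, ∑ c, X i l a * K a b * Q c b * z i c

/-- Empirical exponential loss for the full attention model. -/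
def lossM (X : Fin n → Fin L → Fin d → ℝ) (z : Fin n → Fin d → ℝ)
    (y : Fin n → ℝ) (v : Fin d → ℝ) (K Q : Fin d → Fin de → ℝ) : ℝ :=
  (1 / (n : ℝ)) * ∑ i, Real.exp (-(∑ l, gam X y v i l * S (gM X z i K Q) l))

/-- Partial derivative of f with respect to the (a,b) entry of a matrix. -/
def pDM {d de : ℕ} (f : (Fin d → Fin de → ℝ) → ℝ) (M : Fin d → Fin de → ℝ)
    (a : Fin d) (b : Fin de) : ℝ :=
  fderiv ℝ f M (Pi.single a (Pi.single b 1))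

/-- Gradient flow on the key and query matrices. -/
def MFlow (X : Fin n → Fin L → Fin d → ℝ) (z : Fin n → Fin d → ℝ)
    (y : Fin n → ℝ) (v : Fin d → ℝ) (K Q : ℝ → Fin d → Fin de → ℝ) : Prop :=
  ∀ t : ℝ, 0 ≤ t → ∀ (a : Fin d) (b : Fin de),
    HasDerivAt (fun s => K s a b) (-(pDM (fun M => lossM X z y v M (Q t)) (K t) a b)) t ∧
    HasDerivAt (fun s => Q s a b) (-(pDM (fun M => lossM X z y v (K t) M) (Q t) a b)) t

/-- A rectangular matrix is diagonal: zero off the main diagonal. -/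
def RectDiag {d de : ℕ} (M : Fin d → Fin de → ℝ) : Prop :=
  ∀ (a : Fin d) (b : Fin de), (a : ℕ) ≠ (b : ℕ) → M a b = 0

/-- Orthogonality: U^⊤ U = 1. -/
def Orth {d : ℕ} (U : Fin d → Fin d → ℝ) : Prop :=
  ∀ j j' : Fin d, ∑ a, U a j * U a j' = (if j = j' then (1:ℝ) else 0)

/-- Assumption B1, with the pairing of non-optimal tokens given by the involution σ. -/
def B1 (X : Fin n → Fin L → Fin d → ℝ) (z : Fin n → Fin d → ℝ)
    (opt : Fin n → Fin L) (σ : Fin n → Fin L → Fin L) : Prop :=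
  (∀ i j : Fin n, i ≠ j →
    (∑ a, X i (opt i) a * X j (opt j) a = 0) ∧ (∑ a, z i a * z j a = 0)) ∧
  (∀ i, |∑ a, X i (opt i) a * z i a| = l2 (X i (opt i)) * l2 (z i)) ∧
  (∀ i, ∀ l, l ≠ opt i → σ i l ≠ opt i ∧ σ i l ≠ l ∧ σ i (σ i l) = l ∧
    ∃ c : ℝ, -1 ≤ c ∧ c < 1 ∧
      (∑ a, X i (opt i) a * (X i l a - X i (σ i l) a)) = 0 ∧
      (∀ a, X i l a + X i (σ i l) a = 2 * c * X i (opt i) a))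

/-- Rotated constraint vectors B̃_{il}. -/
def Btil (X : Fin n → Fin L → Fin d → ℝ) (z : Fin n → Fin d → ℝ)
    (opt : Fin n → Fin L) (pim : Fin n → Fin d) (i : Fin n) (l : Fin L) (j : Fin d) : ℝ :=
  Real.sign (∑ a, X i (opt i) a * z i a) * (∑ a, (X i (opt i) a - X i l a) * z i a) *
    (if j = pim i then 1 else 0)

/-- Margin with respect to the rotated constraints. -/
def marginB (X : Fin n → Fin L → Fin d → ℝ) (z : Fin n → Fin d → ℝ)
    (opt : Fin n → Fin L) (pim : Fin n → Fin d) (β : Fin d → ℝ) : ℝ :=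
  sInf {m : ℝ | ∃ i : Fin n, ∃ l : Fin L, l ≠ opt i ∧ m = ∑ j, β j * Btil X z opt pim i l j}

/-- Margin for a combined attention weight matrix. -/
def marginM (X : Fin n → Fin L → Fin d → ℝ) (z : Fin n → Fin d → ℝ)
    (opt : Fin n → Fin L) (W : Fin d → Fin d → ℝ) : ℝ :=
  sInf {m : ℝ | ∃ i : Fin n, ∃ l : Fin L, l ≠ opt i ∧
    m = ∑ a, ∑ c, (X i (opt i) a - X i l a) * W a c * z i c}

/-- The former `Matrix.PosSemidef.sqrt` (removed from Mathlib), with its old definition. -/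
def psdSqrt {d : ℕ} {A : Matrix (Fin d) (Fin d) ℝ} (hA : A.PosSemidef) :
    Matrix (Fin d) (Fin d) ℝ :=
  (hA.1.eigenvectorUnitary : Matrix (Fin d) (Fin d) ℝ) *
    Matrix.diagonal (Real.sqrt ∘ hA.1.eigenvalues) *
    (star hA.1.eigenvectorUnitary : Matrix (Fin d) (Fin d) ℝ)

/-- Nuclear norm ‖W‖_* = trace((W^⊤W)^{1/2}). -/
def nuclear {d : ℕ} (W : Matrix (Fin d) (Fin d) ℝ) : ℝ :=
  (psdSqrt (Matrix.posSemidef_conjTranspose_mul_self W)).trace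

end AttnGF

namespace AttnGF


/-! ### Auxiliary machinery for statement9 -/

/-- The (continuous linear) derivative of `fun b => gD X z i b l`. -/
noncomputable def Dg (X : Fin n → Fin L → Fin d → ℝ) (z : Fin n → Fin d → ℝ)
    (i : Fin n) (l : Fin L) : (Fin d → ℝ) →L[ℝ] ℝ :=
  ∑ j, (X i l j * z i j) • ContinuousLinearMap.proj j

lemma Dg_apply (X : Fin n → Fin L → Fin d → ℝ) (z : Fin n → Fin d → ℝ)
    (i : Fin n) (l : Fin L) (h : Fin d → ℝ) :
    Dg X z i l h = ∑ j, X i l j * z i j * h j := by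
  simp [Dg]

lemma hasFDerivAt_gD (X : Fin n → Fin L → Fin d → ℝ) (z : Fin n → Fin d → ℝ)
    (i : Fin n) (l : Fin L) (β : Fin d → ℝ) :
    HasFDerivAt (fun b => gD X z i b l) (Dg X z i l) β := by
  unfold gD Dg
  refine HasFDerivAt.fun_sum fun j _ => ?_
  have h1 : HasFDerivAt (fun b : Fin d → ℝ => b j)
      (ContinuousLinearMap.proj (R := ℝ) (φ := fun _ : Fin d => ℝ) j) β :=
    (ContinuousLinearMap.proj (R := ℝ) (φ := fun _ : Fin d => ℝ) j).hasFDerivAt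
  have h2 := (h1.mul_const (z i j)).const_mul (X i l j)
  convert h2 using 1
  rfl
  rw [smul_smul]

lemma sum_exp_pos {L : ℕ} (hL : 0 < L) (u : Fin L → ℝ) : 0 < ∑ l, Real.exp (u l) := by
  haveI : Nonempty (Fin L) := ⟨⟨0, hL⟩⟩
  exact Finset.sum_pos (fun _ _ => Real.exp_pos _) Finset.univ_nonempty

lemma S_pos {L : ℕ} (hL : 0 < L) (u : Fin L → ℝ) (l : Fin L) : 0 < S u l :=
  div_pos (Real.exp_pos _) (sum_exp_pos hL u)

lemma sum_S {L : ℕ} (hL : 0 < L) (u : Fin L → ℝ) : ∑ l, S u l = 1 := by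
  simp only [S]
  rw [← Finset.sum_div, div_self (sum_exp_pos hL u).ne']

lemma sigmul_sum {L : ℕ} (hL : 0 < L) (u γv a : Fin L → ℝ) :
    ∑ l, SigMul u γv l * a l =
      (∑ l, γv l * (Real.exp (u l) * a l)) / (∑ l, Real.exp (u l)) -
        (∑ l, γv l * Real.exp (u l)) * (∑ l, Real.exp (u l) * a l) /
          (∑ l, Real.exp (u l)) ^ 2 := by
  have hT := (sum_exp_pos hL u).ne'
  have hC : (∑ m, S u m * γv m) =
      (∑ m, γv m * Real.exp (u m)) / (∑ l, Real.exp (u l)) := by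
    rw [Finset.sum_div]
    exact Finset.sum_congr rfl fun m _ => by rw [S]; ring
  have key : ∀ l, SigMul u γv l * a l =
      γv l * (Real.exp (u l) * a l) / (∑ l, Real.exp (u l)) -
        (∑ m, γv m * Real.exp (u m)) * (Real.exp (u l) * a l) /
          (∑ l, Real.exp (u l)) ^ 2 := by
    intro l
    rw [SigMul, hC, S]
    field_simp
  rw [Finset.sum_congr rfl fun l _ => key l, Finset.sum_sub_distrib, ← Finset.sum_div,
    ← Finset.sum_div, ← Finset.mul_sum]

lemma sigmul_total {L : ℕ} (hL : 0 < L) (u γv : Fin L → ℝ) :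
    ∑ l, SigMul u γv l = 0 := by
  simp only [SigMul]
  rw [Finset.sum_sub_distrib, ← Finset.sum_mul, sum_S hL, one_mul, sub_self]

lemma sigmul_neg {L : ℕ} (hL : 0 < L) (u γv : Fin L → ℝ) (l₀ l : Fin L)
    (hmax : ∀ m, m ≠ l₀ → γv m = γv l) (hlt : γv l < γv l₀) :
    SigMul u γv l < 0 := by
  have hC : γv l < ∑ m, S u m * γv m := by
    have e1 : ∑ m, S u m * γv m - γv l = ∑ m, S u m * (γv m - γv l) := by
      rw [Finset.sum_congr rfl fun m (_ : m ∈ Finset.univ) =>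
          (mul_sub (S u m) (γv m) (γv l)), Finset.sum_sub_distrib, ← Finset.sum_mul,
          sum_S hL, one_mul]
    have e2 : ∑ m, S u m * (γv m - γv l) = S u l₀ * (γv l₀ - γv l) := by
      rw [← Finset.add_sum_erase _ _ (Finset.mem_univ l₀), Finset.sum_eq_zero, add_zero]
      intro m hm
      rw [hmax m (Finset.mem_erase.mp hm).1, sub_self, mul_zero]
    nlinarith [S_pos hL u l₀, mul_pos (S_pos hL u l₀) (sub_pos.mpr hlt)]
  rw [SigMul]
  nlinarith [S_pos hL u l, mul_pos (S_pos hL u l) (sub_pos.mpr hC)]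

lemma hasFDerivAt_lossD {n L d : ℕ} (hL : 0 < L)
    (X : Fin n → Fin L → Fin d → ℝ) (z : Fin n → Fin d → ℝ)
    (y : Fin n → ℝ) (v : Fin d → ℝ) (β : Fin d → ℝ) :
    ∃ D : (Fin d → ℝ) →L[ℝ] ℝ, HasFDerivAt (lossD X z y v) D β ∧
      ∀ h : Fin d → ℝ, D h =
        (1 / (n : ℝ)) * ∑ i, Real.exp (-(∑ l', gam X y v i l' * S (gD X z i β) l')) *
          (-(∑ l, SigMul (gD X z i β) (gam X y v i) l * Dg X z i l h)) := by
  have hTpos : ∀ i : Fin n, 0 < ∑ l, Real.exp (gD X z i β l) :=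
    fun i => sum_exp_pos hL _
  have he : ∀ (i : Fin n) (l : Fin L),
      HasFDerivAt (fun b => Real.exp (gD X z i b l))
        (Real.exp (gD X z i β l) • Dg X z i l) β :=
    fun i l => (hasFDerivAt_gD X z i l β).exp
  have hT : ∀ i : Fin n,
      HasFDerivAt (fun b => ∑ l, Real.exp (gD X z i b l))
        (∑ l, Real.exp (gD X z i β l) • Dg X z i l) β :=
    fun i => HasFDerivAt.fun_sum (fun l _ => he i l)
  have hA : ∀ i : Fin n,
      HasFDerivAt (fun b => ∑ l, gam X y v i l * Real.exp (gD X z i b l))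
        (∑ l, gam X y v i l • (Real.exp (gD X z i β l) • Dg X z i l)) β :=
    fun i => HasFDerivAt.fun_sum (fun l _ => (he i l).const_mul (gam X y v i l))
  have hinv : ∀ i : Fin n,
      HasFDerivAt (fun b => (∑ l, Real.exp (gD X z i b l))⁻¹)
        ((-((∑ l, Real.exp (gD X z i β l)) ^ 2)⁻¹) •
          (∑ l, Real.exp (gD X z i β l) • Dg X z i l)) β :=
    fun i => (hasDerivAt_inv (hTpos i).ne').comp_hasFDerivAt β (hT i)
  have hφ : ∀ i : Fin n,
      HasFDerivAt (fun b => Real.exp (-((∑ l, gam X y v i l * Real.exp (gD X z i b l)) *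
          (∑ l, Real.exp (gD X z i b l))⁻¹)))
        (Real.exp (-((∑ l, gam X y v i l * Real.exp (gD X z i β l)) *
            (∑ l, Real.exp (gD X z i β l))⁻¹)) •
          (-((∑ l, gam X y v i l * Real.exp (gD X z i β l)) •
              ((-((∑ l, Real.exp (gD X z i β l)) ^ 2)⁻¹) •
                (∑ l, Real.exp (gD X z i β l) • Dg X z i l)) +
            (∑ l, Real.exp (gD X z i β l))⁻¹ •
              (∑ l, gam X y v i l • (Real.exp (gD X z i β l) • Dg X z i l))))) β :=
    fun i => (((hA i).mul (hinv i)).neg).exp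
  have hF := (HasFDerivAt.fun_sum (fun i (_ : i ∈ Finset.univ) => hφ i)).const_mul (1 / (n : ℝ))
  have hAT : ∀ (i : Fin n) (b : Fin d → ℝ),
      (∑ l, gam X y v i l * Real.exp (gD X z i b l)) * (∑ l, Real.exp (gD X z i b l))⁻¹ =
      ∑ l, gam X y v i l * S (gD X z i b) l := by
    intro i b
    rw [Finset.sum_mul]
    refine Finset.sum_congr rfl fun l _ => ?_
    rw [S, div_eq_mul_inv]; ring
  have hfun : (fun b => (1 / (n : ℝ)) * ∑ i, Real.exp (-((∑ l, gam X y v i l *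
      Real.exp (gD X z i b l)) * (∑ l, Real.exp (gD X z i b l))⁻¹))) = lossD X z y v := by
    funext b
    unfold lossD
    congr 1
    exact Finset.sum_congr rfl fun i _ => by rw [hAT]
  rw [hfun] at hF
  refine ⟨_, hF, fun h => ?_⟩
  simp only [ContinuousLinearMap.smul_apply, ContinuousLinearMap.coe_sum',
    Finset.sum_apply, ContinuousLinearMap.neg_apply, ContinuousLinearMap.add_apply,
    smul_eq_mul]
  congr 1
  refine Finset.sum_congr rfl fun i _ => ?_
  rw [← hAT i β, sigmul_sum hL (gD X z i β) (gam X y v i) (fun l => Dg X z i l h)]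
  ring

/-- correlation of the gradient with a feasible direction is negative;
hence the gradient never vanishes. -/
theorem statement9 {n L d : ℕ} (hn : 0 < n) (hL : 2 ≤ L)
    (X : Fin n → Fin L → Fin d → ℝ) (z : Fin n → Fin d → ℝ)
    (y : Fin n → ℝ) (v : Fin d → ℝ)
    (opt : Fin n → Fin L) (nopt : Fin n → ℝ)
    (hA1 : A1 X y v opt nopt)
    (βf : Fin d → ℝ) (hfeas : Feas X z opt βf) :
    ∀ β : Fin d → ℝ,
      ((∑ j, pD (lossD X z y v) β j * βf j) ≤
        (1 / (n : ℝ)) * ∑ i : Fin n, ∑ l ∈ Finset.univ.erase (opt i),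
          Real.exp (-(∑ l', gam X y v i l' * S (gD X z i β) l')) *
            SigMul (gD X z i β) (gam X y v i) l) ∧
      ((1 / (n : ℝ)) * ∑ i : Fin n, ∑ l ∈ Finset.univ.erase (opt i),
          Real.exp (-(∑ l', gam X y v i l' * S (gD X z i β) l')) *
            SigMul (gD X z i β) (gam X y v i) l < 0) ∧
      (fun j => pD (lossD X z y v) β j) ≠ 0 := by
  intro β
  have hL0 : 0 < L := by omega
  obtain ⟨D, hD, hval⟩ := hasFDerivAt_lossD hL0 X z y v β
  have hpd : ∀ j, pD (lossD X z y v) β j = D (Pi.single j 1) := fun j => by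
    rw [pD, hD.fderiv]
  have hβf : βf = ∑ j, βf j • (Pi.single j 1 : Fin d → ℝ) := by
    funext k
    simp [Finset.sum_apply, Pi.single_apply, mul_ite]
  have hdot : (∑ j, pD (lossD X z y v) β j * βf j) = D βf := by
    conv_rhs => rw [hβf]
    rw [map_sum]
    refine Finset.sum_congr rfl fun j _ => ?_
    rw [hpd j, map_smul, smul_eq_mul, mul_comm]
  -- negativity of each non-optimal SigMul entry
  have hMneg : ∀ i : Fin n, ∀ l ∈ Finset.univ.erase (opt i),
      SigMul (gD X z i β) (gam X y v i) l < 0 := by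
    intro i l hl
    have hl' := (Finset.mem_erase.mp hl).1
    refine sigmul_neg hL0 _ _ (opt i) l (fun m hm => ?_) (hA1 i l hl').1
    calc gam X y v i m = nopt i := (hA1 i m hm).2
      _ = gam X y v i l := ((hA1 i l hl').2).symm
  -- feasibility in Dg form
  have hfeas' : ∀ i : Fin n, ∀ l ∈ Finset.univ.erase (opt i),
      1 ≤ Dg X z i (opt i) βf - Dg X z i l βf := by
    intro i l hl
    have h1 := hfeas i l (Finset.mem_erase.mp hl).1
    have h2 : (∑ j, βf j * Bv X z opt i l j) =
        Dg X z i (opt i) βf - Dg X z i l βf := by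
      rw [Dg_apply, Dg_apply, ← Finset.sum_sub_distrib]
      refine Finset.sum_congr rfl fun j _ => ?_
      rw [Bv]; ring
    rw [h2] at h1
    exact h1
  -- per-sample key inequality
  have hkey : ∀ i : Fin n,
      Real.exp (-(∑ l', gam X y v i l' * S (gD X z i β) l')) *
        (-(∑ l, SigMul (gD X z i β) (gam X y v i) l * Dg X z i l βf)) ≤
      ∑ l ∈ Finset.univ.erase (opt i),
        Real.exp (-(∑ l', gam X y v i l' * S (gD X z i β) l')) *
          SigMul (gD X z i β) (gam X y v i) l := by
    intro i
    have hsum0 : ∑ l, SigMul (gD X z i β) (gam X y v i) l = 0 := sigmul_total hL0 _ _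
    have hsplitM := Finset.add_sum_erase Finset.univ
      (fun l => SigMul (gD X z i β) (gam X y v i) l) (Finset.mem_univ (opt i))
    rw [hsum0] at hsplitM
    have hsplita := Finset.add_sum_erase Finset.univ
      (fun l => SigMul (gD X z i β) (gam X y v i) l * Dg X z i l βf)
      (Finset.mem_univ (opt i))
    have e1 : ∑ l ∈ Finset.univ.erase (opt i),
        SigMul (gD X z i β) (gam X y v i) l *
          (Dg X z i (opt i) βf - Dg X z i l βf) =
        (∑ l ∈ Finset.univ.erase (opt i), SigMul (gD X z i β) (gam X y v i) l) *
          Dg X z i (opt i) βf -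
        ∑ l ∈ Finset.univ.erase (opt i),
          SigMul (gD X z i β) (gam X y v i) l * Dg X z i l βf := by
      rw [Finset.sum_congr rfl fun l (_ : l ∈ Finset.univ.erase (opt i)) =>
        mul_sub (SigMul (gD X z i β) (gam X y v i) l) (Dg X z i (opt i) βf)
          (Dg X z i l βf), Finset.sum_sub_distrib, Finset.sum_mul]
    have e2 : -(∑ l, SigMul (gD X z i β) (gam X y v i) l * Dg X z i l βf) =
        ∑ l ∈ Finset.univ.erase (opt i),
          SigMul (gD X z i β) (gam X y v i) l *
            (Dg X z i (opt i) βf - Dg X z i l βf) := by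
      have hh : (∑ l ∈ Finset.univ.erase (opt i), SigMul (gD X z i β) (gam X y v i) l) =
          -SigMul (gD X z i β) (gam X y v i) (opt i) := by
        linarith
      rw [e1, hh, neg_mul]
      linarith [hsplita]
    rw [e2, Finset.mul_sum]
    refine Finset.sum_le_sum fun l hl => ?_
    have hE := Real.exp_pos (-(∑ l', gam X y v i l' * S (gD X z i β) l'))
    have hterm : SigMul (gD X z i β) (gam X y v i) l *
        (Dg X z i (opt i) βf - Dg X z i l βf) ≤
        SigMul (gD X z i β) (gam X y v i) l := by
      have := mul_le_mul_of_nonpos_left (hfeas' i l hl) (le_of_lt (hMneg i l hl))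
      simpa using this
    exact mul_le_mul_of_nonneg_left hterm hE.le
  have hinvn : (0 : ℝ) < 1 / (n : ℝ) := by positivity
  constructor
  · rw [hdot, hval βf]
    exact mul_le_mul_of_nonneg_left (Finset.sum_le_sum fun i _ => hkey i) hinvn.le
  constructor
  · refine mul_neg_of_pos_of_neg hinvn ?_
    haveI : Nonempty (Fin n) := ⟨⟨0, hn⟩⟩
    refine Finset.sum_neg (fun i _ => ?_) Finset.univ_nonempty
    obtain ⟨l, hl⟩ := Fintype.exists_ne_of_one_lt_card
      (by simpa using (by omega : 1 < L)) (opt i)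
    refine Finset.sum_neg (fun l' hl' => mul_neg_of_pos_of_neg (Real.exp_pos _)
      (hMneg i l' hl')) ⟨l, Finset.mem_erase.mpr ⟨hl, Finset.mem_univ l⟩⟩
  · intro hzero
    have hz : (∑ j, pD (lossD X z y v) β j * βf j) = 0 :=
      Finset.sum_eq_zero fun j _ => by
        rw [show pD (lossD X z y v) β j = 0 from congrFun hzero j, zero_mul]
    have hle : (∑ j, pD (lossD X z y v) β j * βf j) ≤
        (1 / (n : ℝ)) * ∑ i : Fin n, ∑ l ∈ Finset.univ.erase (opt i),
          Real.exp (-(∑ l', gam X y v i l' * S (gD X z i β) l')) *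
            SigMul (gD X z i β) (gam X y v i) l := by
      rw [hdot, hval βf]
      exact mul_le_mul_of_nonneg_left (Finset.sum_le_sum fun i _ => hkey i) hinvn.le
    have hlt : (1 / (n : ℝ)) * ∑ i : Fin n, ∑ l ∈ Finset.univ.erase (opt i),
        Real.exp (-(∑ l', gam X y v i l' * S (gD X z i β) l')) *
          SigMul (gD X z i β) (gam X y v i) l < 0 := by
      refine mul_neg_of_pos_of_neg hinvn ?_
      haveI : Nonempty (Fin n) := ⟨⟨0, hn⟩⟩
      refine Finset.sum_neg (fun i _ => ?_) Finset.univ_nonempty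
      obtain ⟨l, hl⟩ := Fintype.exists_ne_of_one_lt_card
        (by simpa using (by omega : 1 < L)) (opt i)
      refine Finset.sum_neg (fun l' hl' => mul_neg_of_pos_of_neg (Real.exp_pos _)
        (hMneg i l' hl')) ⟨l, Finset.mem_erase.mpr ⟨hl, Finset.mem_univ l⟩⟩
    linarith


end AttnGF
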